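/- Let X be a set and Y a proper subset of X with at least two elements, and let Q = {α ∈ T(X,Y) : α(X) ⊆ α(Y)}. The (nonempty two-sided) ideals of the semigroup Q are precisely the sets Q_r = {α ∈ Q : |α(X)| < r}, where r ranges over the cardinals with 1 < r ≤ |Y|⁺ (the successor cardinal of the cardinality of Y). -/
import Mathlib


universe u

/-- `α` belongs to `Q = {α ∈ T(X,Y) : α(X) ⊆ α(Y)}`. -/
def inQ {X : Type u} (Y : Set X) (α : X → X) : Prop :=
  Set.range α ⊆ Y ∧ Set.range α ⊆ α '' Y

lemma mem_ideal_of_le {X : Type u} (Y : Set X) (I : Set (X → X)) (x₀ : X)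
    (hsub : I ⊆ {α | inQ Y α})
    (hI : ∀ α ∈ I, ∀ β : X → X, inQ Y β → β ∘ α ∈ I ∧ α ∘ β ∈ I)
    {α β : X → X} (hα : α ∈ I) (hβ : inQ Y β)
    (hle : Cardinal.mk (Set.range β) ≤ Cardinal.mk (Set.range α)) : β ∈ I := by
  classical
  obtain ⟨e⟩ := (Cardinal.le_def _ _).mp hle
  have hαQ : inQ Y α := hsub hα
  have hp : ∀ t : Set.range α, ∃ y, y ∈ Y ∧ α y = (t : X) := by
    intro t
    obtain ⟨y, hy, hyt⟩ := hαQ.2 t.2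
    exact ⟨y, hy, hyt⟩
  choose p hpY hpα using hp
  set γ : X → X := fun x => p (e ⟨β x, Set.mem_range_self x⟩) with hγdef
  set δ : X → X := fun x =>
    if h : ∃ s : Set.range β, (e s : X) = x then (h.choose : X) else β x₀ with hδdef
  have hδe : ∀ s : Set.range β, δ (e s) = (s : X) := by
    intro s
    have h : ∃ s' : Set.range β, (e s' : X) = (e s : X) := ⟨s, rfl⟩
    have hch : h.choose = s := e.injective (Subtype.ext h.choose_spec)
    simp only [hδdef, dif_pos h, hch]
  have hkey : δ ∘ (α ∘ γ) = β := by
    funext x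
    have h1 : α (γ x) = (e ⟨β x, Set.mem_range_self x⟩ : X) := hpα _
    show δ (α (γ x)) = β x
    rw [h1, hδe]
  have hγQ : inQ Y γ := by
    constructor
    · rintro _ ⟨x, rfl⟩
      exact hpY _
    · rintro _ ⟨x, rfl⟩
      obtain ⟨y, hyY, hyx⟩ := hβ.2 (Set.mem_range_self x)
      refine ⟨y, hyY, ?_⟩
      exact congrArg (fun s => p (e s)) (Subtype.ext hyx)
  have hβY : Set.range β ⊆ Y := hβ.1
  have hδQ : inQ Y δ := by
    constructor
    · rintro _ ⟨x, rfl⟩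
      by_cases h : ∃ s : Set.range β, (e s : X) = x
      · simp only [hδdef, dif_pos h]
        exact hβY h.choose.2
      · simp only [hδdef, dif_neg h]
        exact hβY (Set.mem_range_self x₀)
    · rintro _ ⟨x, rfl⟩
      by_cases h : ∃ s : Set.range β, (e s : X) = x
      · refine ⟨(e h.choose : X), hαQ.1 (e h.choose).2, ?_⟩
        rw [hδe h.choose]
        simp only [hδdef, dif_pos h]
      · refine ⟨(e ⟨β x₀, Set.mem_range_self x₀⟩ : X),
          hαQ.1 (e ⟨β x₀, Set.mem_range_self x₀⟩).2, ?_⟩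
        rw [hδe ⟨β x₀, Set.mem_range_self x₀⟩]
        simp only [hδdef, dif_neg h]
  have h1 : α ∘ γ ∈ I := (hI α hα γ hγQ).2
  have h2 : δ ∘ (α ∘ γ) ∈ I := (hI _ h1 δ hδQ).1
  rwa [hkey] at h2

/-- Let `X` be a set, `Y` a proper subset of `X` with at least two
elements, and `Q = {α ∈ T(X,Y) : α(X) ⊆ α(Y)}` (multiplication `α·β := β ∘ α`). The
nonempty two-sided ideals of the semigroup `Q` are precisely the sets
`Q_r = {α ∈ Q : |α(X)| < r}` for cardinals `r` with `1 < r ≤ |Y|⁺`. -/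
theorem ideals_of_Q {X : Type u} (Y : Set X) (hY : Y.Nontrivial)
    (hYX : Y ≠ Set.univ) (I : Set (X → X)) :
    (I.Nonempty ∧ I ⊆ {α | inQ Y α} ∧
      ∀ α ∈ I, ∀ β : X → X, inQ Y β → β ∘ α ∈ I ∧ α ∘ β ∈ I) ↔
    ∃ r : Cardinal.{u}, 1 < r ∧ r ≤ Order.succ (Cardinal.mk ↥Y) ∧
      I = {α | inQ Y α ∧ Cardinal.mk (Set.range α) < r} := by
  classical
  obtain ⟨y₀, hy₀, y₁, hy₁, hne01⟩ := hY
  haveI : Nonempty X := ⟨y₀⟩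
  constructor
  · rintro ⟨hne, hsub, hI⟩
    obtain ⟨α₀, hα₀⟩ := hne
    haveI : Nonempty I := ⟨⟨α₀, hα₀⟩⟩
    set f : I → Cardinal.{u} :=
      fun α => Order.succ (Cardinal.mk (Set.range (α : X → X))) with hfdef
    have hbdd : BddAbove (Set.range f) := Cardinal.bddAbove_range f
    refine ⟨⨆ α : I, f α, ?_, ?_, ?_⟩
    · have h1 : (1 : Cardinal) < f ⟨α₀, hα₀⟩ := by
        rw [hfdef]
        simp only
        rw [Order.lt_succ_iff]
        haveI := (Set.range_nonempty α₀).to_subtype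
        exact Cardinal.one_le_iff_ne_zero.mpr (Cardinal.mk_ne_zero _)
      exact h1.trans_le (le_ciSup hbdd ⟨α₀, hα₀⟩)
    · exact ciSup_le' fun α => Order.succ_le_succ
        (Cardinal.mk_le_mk_of_subset (hsub α.2).1)
    · ext β
      constructor
      · intro hβ
        exact ⟨hsub hβ, lt_of_lt_of_le (Order.lt_succ _) (le_ciSup hbdd ⟨β, hβ⟩)⟩
      · rintro ⟨hβQ, hβr⟩
        obtain ⟨⟨α, hα⟩, hlt⟩ := exists_lt_of_lt_ciSup hβr
        exact mem_ideal_of_le Y I y₀ hsub hI hα hβQ (Order.lt_succ_iff.mp hlt)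
  · rintro ⟨r, hr1, hrY, rfl⟩
    refine ⟨?_, fun α hα => hα.1, ?_⟩
    · refine ⟨fun _ => y₀, ⟨⟨?_, ?_⟩, ?_⟩⟩
      · rintro _ ⟨x, rfl⟩; exact hy₀
      · rintro _ ⟨x, rfl⟩; exact ⟨y₀, hy₀, rfl⟩
      · rw [Set.range_const, Cardinal.mk_singleton]
        exact hr1
    · rintro α ⟨hαQ, hαr⟩ β hβQ
      constructor
      · refine ⟨⟨?_, ?_⟩, ?_⟩
        · rintro _ ⟨x, rfl⟩; exact hβQ.1 (Set.mem_range_self _)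
        · rintro _ ⟨x, rfl⟩
          obtain ⟨y, hyY, hyx⟩ := hαQ.2 (Set.mem_range_self x)
          exact ⟨y, hyY, by show β (α y) = β (α x); rw [hyx]⟩
        · refine lt_of_le_of_lt ?_ hαr
          rw [Set.range_comp]
          exact Cardinal.mk_image_le
      · refine ⟨⟨?_, ?_⟩, ?_⟩
        · rintro _ ⟨x, rfl⟩; exact hαQ.1 (Set.mem_range_self _)
        · rintro _ ⟨x, rfl⟩
          obtain ⟨y, hyY, hyx⟩ := hβQ.2 (Set.mem_range_self x)
          exact ⟨y, hyY, by show α (β y) = α (β x); rw [hyx]⟩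
        · refine lt_of_le_of_lt ?_ hαr
          apply Cardinal.mk_le_mk_of_subset
          rintro _ ⟨x, rfl⟩
          exact Set.mem_range_self _
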